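/- Let C = (c_{ij}) be an invertible 2×2 complex matrix, and let λ, μ, λ̃, μ̃ > 0. Suppose there exist m₁, m₂ > 0 such that for all n ∈ ℕ, m₁·diag((λ)ₙ, (μ)ₙ) ≤ C·diag((λ̃)ₙ, (μ̃)ₙ)·C* ≤ m₂·diag((λ)ₙ, (μ)ₙ) in the Loewner order, where (x)ₙ is the Pochhammer symbol. Then {λ, μ} = {λ̃, μ̃} as multisets. -/

import Mathlib

open scoped Matrix ComplexOrder
/-- Pochhammer symbol `(x)ₙ = Γ(x+n)/Γ(x)`. -/
noncomputable def poch (x : ℝ) (n : ℕ) : ℝ := Real.Gamma (x + n) / Real.Gamma x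

lemma poch_zero' {x : ℝ} (hx : 0 < x) : poch x 0 = 1 := by
  simp [poch, div_self (Real.Gamma_pos_of_pos hx).ne']

lemma poch_pos {x : ℝ} (hx : 0 < x) (n : ℕ) : 0 < poch x n :=
  div_pos (Real.Gamma_pos_of_pos (by positivity)) (Real.Gamma_pos_of_pos hx)

lemma poch_succ {x : ℝ} (hx : 0 < x) (n : ℕ) : poch x (n + 1) = poch x n * (x + n) := by
  have h : x + (n : ℝ) ≠ 0 := by positivity
  have : x + ((n : ℕ) + 1 : ℕ) = (x + n) + 1 := by push_cast; ring
  rw [poch, this, Real.Gamma_add_one h, poch]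
  ring

lemma poch_mono {x y : ℝ} (hx : 0 < x) (hxy : x ≤ y) (n : ℕ) : poch x n ≤ poch y n := by
  have hy : 0 < y := lt_of_lt_of_le hx hxy
  induction n with
  | zero => rw [poch_zero' hx, poch_zero' hy]
  | succ n ih =>
    rw [poch_succ hx, poch_succ hy]
    have := poch_pos hx n
    have := poch_pos hy n
    nlinarith [Nat.cast_nonneg (α := ℝ) n]

lemma poch_le_of_forall_le {x y c : ℝ} (hx : 0 < x) (hy : 0 < y)
    (H : ∀ n, poch x n ≤ c * poch y n) : x ≤ y := by
  by_contra hlt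
  push_neg at hlt
  set S : ℕ → ℝ := fun n => ∑ k ∈ Finset.range n, 1 / (y + k) with hS
  have hSnn : ∀ n, 0 ≤ S n := by
    intro n; apply Finset.sum_nonneg; intro k _; positivity
  have key : ∀ n, (1 + (x - y) * S n) * poch y n ≤ poch x n := by
    intro n
    induction n with
    | zero => simp [poch_zero' hx, poch_zero' hy, hS]
    | succ n ih =>
      rw [poch_succ hx, poch_succ hy]
      have h1 : S (n+1) = S n + 1 / (y + n) := by rw [hS]; simp [Finset.sum_range_succ]
      have hyn : (0:ℝ) < y + n := by positivity
      have hpy := poch_pos hy n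
      rw [h1]
      have e1 : (1 + (x - y) * (S n + 1 / (y + n))) * (poch y n * (y + n))
          = (1 + (x - y) * S n) * poch y n * (y + n) + (x - y) * poch y n := by
        field_simp
        ring
      rw [e1]
      have e2 : (1 + (x - y) * S n) * poch y n * (y + n) + (x - y) * poch y n
          ≤ (1 + (x - y) * S n) * poch y n * (x + n) := by
        nlinarith [mul_nonneg (mul_nonneg (hSnn n) hpy.le) (mul_self_nonneg (x - y))]
      refine e2.trans ?_
      have hxn : (0:ℝ) ≤ x + n := by positivity
      nlinarith
  have bound : ∀ n, S n ≤ (c - 1) / (x - y) := by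
    intro n
    have h1 := (key n).trans (H n)
    have hpy := poch_pos hy n
    have h2 : 1 + (x - y) * S n ≤ c := by
      have := (mul_le_mul_iff_of_pos_right hpy).mp h1
      linarith
    rw [le_div_iff₀ (by linarith)]
    nlinarith
  set M : ℝ := max y 1 with hM
  have hM1 : (1:ℝ) ≤ M := le_max_right _ _
  have hMy : y ≤ M := le_max_left _ _
  have hMpos : (0:ℝ) < M := by linarith
  have comp : ∀ n, (∑ i ∈ Finset.range n, (1 / (i + 1) : ℝ)) ≤ M * S n := by
    intro n
    rw [Finset.mul_sum]
    apply Finset.sum_le_sum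
    intro k _
    have hk : (0:ℝ) ≤ (k:ℝ) := Nat.cast_nonneg k
    rw [div_le_iff₀ (by positivity)]
    have : M * (1 / (y + k)) * (k + 1) = M * (k+1) / (y + k) := by ring
    rw [this, le_div_iff₀ (by positivity)]
    nlinarith
  obtain ⟨n, hn⟩ := (Real.tendsto_sum_range_one_div_nat_succ_atTop.eventually_ge_atTop
    (M * ((c - 1) / (x - y)) + 1)).exists
  have := (comp n).trans (by nlinarith [bound n] : M * S n ≤ M * ((c - 1) / (x - y)))
  linarith

lemma poch_eq_aux {x y c₁ c₂ c₃ c₄ : ℝ} (hx : 0 < x) (hy : 0 < y)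
    (hc₁ : 0 < c₁) (hc₃ : 0 < c₃)
    (H1 : ∀ n, c₁ * poch x n ≤ c₂ * poch y n) (H2 : ∀ n, c₃ * poch y n ≤ c₄ * poch x n) :
    x = y := by
  have h1 : x ≤ y := poch_le_of_forall_le hx hy (c := c₂ / c₁) fun n => by
    rw [div_mul_eq_mul_div, le_div_iff₀ hc₁]; linarith [H1 n]
  have h2 : y ≤ x := poch_le_of_forall_le hy hx (c := c₄ / c₃) fun n => by
    rw [div_mul_eq_mul_div, le_div_iff₀ hc₃]; linarith [H2 n]
  linarith

/-- Key: if `c₁ (x)ₙ ≤ a (x')ₙ + b (y')ₙ ≤ c₂ (x)ₙ` then `x ∈ {x', y'}`. -/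
lemma poch_key {x x' y' a b c₁ c₂ : ℝ} (hx : 0 < x) (hx' : 0 < x') (hy' : 0 < y')
    (ha : 0 ≤ a) (hb : 0 ≤ b) (hab : 0 < a + b) (hc₁ : 0 < c₁) (hc₂ : 0 < c₂)
    (H1 : ∀ n, c₁ * poch x n ≤ a * poch x' n + b * poch y' n)
    (H2 : ∀ n, a * poch x' n + b * poch y' n ≤ c₂ * poch x n) :
    x = x' ∨ x = y' := by
  have main : ∀ u v p q : ℝ, 0 < u → 0 < v → u ≤ v → 0 ≤ p → 0 < q →
      (∀ n, c₁ * poch x n ≤ p * poch u n + q * poch v n) →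
      (∀ n, p * poch u n + q * poch v n ≤ c₂ * poch x n) → x = v := by
    intro u v p q hu hv huv hp hq G1 G2
    refine poch_eq_aux (c₂ := p + q) (c₄ := c₂) hx hv hc₁ hq (fun n => ?_) (fun n => ?_)
    · calc c₁ * poch x n ≤ p * poch u n + q * poch v n := G1 n
        _ ≤ (p + q) * poch v n := by nlinarith [poch_mono hu huv n]
    · calc q * poch v n ≤ p * poch u n + q * poch v n := by
            nlinarith [poch_pos hu n]
        _ ≤ c₂ * poch x n := G2 n
  rcases le_total x' y' with hle | hle
  · rcases hb.lt_or_eq with hb' | hb'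
    · exact Or.inr (main x' y' a b hx' hy' hle ha hb' H1 H2)
    · left
      have ha' : 0 < a := by rw [← hb'] at hab; linarith
      refine poch_eq_aux (c₂ := a) (c₄ := c₂) hx hx' hc₁ ha' (fun n => ?_) (fun n => ?_)
      · have := H1 n; rw [← hb'] at this; linarith
      · have := H2 n; rw [← hb'] at this; linarith
  · rcases ha.lt_or_eq with ha' | ha'
    · refine Or.inl (main y' x' b a hy' hx' hle hb ha' (fun n => ?_) (fun n => ?_))
      · linarith [H1 n]
      · linarith [H2 n]
    · right
      have hb' : 0 < b := by rw [← ha'] at hab; linarith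
      refine poch_eq_aux (c₂ := b) (c₄ := c₂) hx hy' hc₁ hb' (fun n => ?_) (fun n => ?_)
      · have := H1 n; rw [← ha'] at this; linarith
      · have := H2 n; rw [← ha'] at this; linarith

lemma diag_entry_nonneg {M : Matrix (Fin 2) (Fin 2) ℂ} (hM : M.PosSemidef) (i : Fin 2) :
    0 ≤ M i i := by
  exact hM.diag_nonneg

lemma entry_formula (C : Matrix (Fin 2) (Fin 2) ℂ) (p q : ℝ) (i : Fin 2) :
    (C * Matrix.diagonal ![(p:ℂ), (q:ℂ)] * Cᴴ) i i =
      ((Complex.normSq (C i 0) * p + Complex.normSq (C i 1) * q : ℝ) : ℂ) := by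
  simp only [Matrix.mul_apply, Matrix.diagonal_apply, Matrix.conjTranspose_apply,
    Fin.sum_univ_two, Matrix.cons_val_zero, Matrix.cons_val_one, Matrix.head_cons,
    if_true, if_pos, reduceIte, mul_zero, zero_add, add_zero, mul_ite, ite_mul, zero_mul]
  norm_num
  rw [mul_comm (C i 0) ((p:ℝ):ℂ), mul_comm (C i 1) ((q:ℝ):ℂ), mul_assoc, mul_assoc,
    Complex.mul_conj, Complex.mul_conj]
  ring

lemma diag_entry_eq (r s : ℝ) (i : Fin 2) :
    (Matrix.diagonal ![(r:ℂ), (s:ℂ)]) i i = ((![r, s] i : ℝ) : ℂ) := by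
  fin_cases i <;> simp

lemma smul_diag (m r s : ℝ) :
    m • Matrix.diagonal ![(r:ℂ), (s:ℂ)] = Matrix.diagonal ![((m*r : ℝ):ℂ), ((m*s : ℝ):ℂ)] := by
  ext i j
  fin_cases i <;> fin_cases j <;> simp [Complex.real_smul] <;> push_cast <;> ring

lemma extract₁ {C : Matrix (Fin 2) (Fin 2) ℂ} {p q r s : ℝ}
    (h : (C * Matrix.diagonal ![(p:ℂ), (q:ℂ)] * Cᴴ -
      Matrix.diagonal ![(r:ℂ), (s:ℂ)]).PosSemidef) (i : Fin 2) :
    ![r, s] i ≤ Complex.normSq (C i 0) * p + Complex.normSq (C i 1) * q := by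
  have h0 := diag_entry_nonneg h i
  rw [Matrix.sub_apply, entry_formula, diag_entry_eq, ← Complex.ofReal_sub,
    Complex.zero_le_real] at h0
  linarith

lemma extract₂ {C : Matrix (Fin 2) (Fin 2) ℂ} {p q r s : ℝ}
    (h : (Matrix.diagonal ![(r:ℂ), (s:ℂ)] -
      C * Matrix.diagonal ![(p:ℂ), (q:ℂ)] * Cᴴ).PosSemidef) (i : Fin 2) :
    Complex.normSq (C i 0) * p + Complex.normSq (C i 1) * q ≤ ![r, s] i := by
  have h0 := diag_entry_nonneg h i
  rw [Matrix.sub_apply, entry_formula, diag_entry_eq, ← Complex.ofReal_sub,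
    Complex.zero_le_real] at h0
  linarith

lemma row_pos {C : Matrix (Fin 2) (Fin 2) ℂ} (hdet : C.det ≠ 0) (i : Fin 2) :
    0 < Complex.normSq (C i 0) + Complex.normSq (C i 1) := by
  by_contra h0
  push_neg at h0
  have n0 := Complex.normSq_nonneg (C i 0)
  have n1 := Complex.normSq_nonneg (C i 1)
  have e0 : C i 0 = 0 := Complex.normSq_eq_zero.mp (by linarith)
  have e1 : C i 1 = 0 := Complex.normSq_eq_zero.mp (by linarith)
  apply hdet
  rw [Matrix.det_fin_two]
  fin_cases i <;> simp_all

/-- If `C` is an invertible `2×2` complex matrix with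
`m₁ diag((λ)ₙ,(μ)ₙ) ≤ C diag((λ̃)ₙ,(μ̃)ₙ) Cᴴ ≤ m₂ diag((λ)ₙ,(μ)ₙ)` in the Loewner order for
all `n`, then `{λ, μ} = {λ̃, μ̃}`. -/
theorem stmt10 (C : Matrix (Fin 2) (Fin 2) ℂ) (hC : IsUnit C)
    (l μ l' μ' : ℝ) (hl : 0 < l) (hμ : 0 < μ) (hl' : 0 < l') (hμ' : 0 < μ')
    (m₁ m₂ : ℝ) (hm₁ : 0 < m₁) (hm₂ : 0 < m₂)
    (h : ∀ n : ℕ,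
      (C * Matrix.diagonal ![(poch l' n : ℂ), (poch μ' n : ℂ)] * Cᴴ -
        m₁ • Matrix.diagonal ![(poch l n : ℂ), (poch μ n : ℂ)]).PosSemidef ∧
      (m₂ • Matrix.diagonal ![(poch l n : ℂ), (poch μ n : ℂ)] -
        C * Matrix.diagonal ![(poch l' n : ℂ), (poch μ' n : ℂ)] * Cᴴ).PosSemidef) :
    (l = l' ∧ μ = μ') ∨ (l = μ' ∧ μ = l') := by
  have hdet : IsUnit C.det := (Matrix.isUnit_iff_isUnit_det C).mp hC
  set B := C⁻¹ with hBdef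
  have hBC : B * C = 1 := Matrix.nonsing_inv_mul C hdet
  have hCBH : Cᴴ * Bᴴ = 1 := by
    rw [← Matrix.conjTranspose_mul, hBC, Matrix.conjTranspose_one]
  have hBdet : B.det ≠ 0 := (Matrix.isUnit_nonsing_inv_det C hdet).ne_zero
  -- abbreviations
  set a0 := Complex.normSq (C 0 0)
  set b0 := Complex.normSq (C 0 1)
  set a1 := Complex.normSq (C 1 0)
  set b1 := Complex.normSq (C 1 1)
  set A0 := Complex.normSq (B 0 0)
  set B0 := Complex.normSq (B 0 1)
  set A1 := Complex.normSq (B 1 0)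
  set B1 := Complex.normSq (B 1 1)
  have hrow0 := row_pos hdet.ne_zero 0
  have hrow1 := row_pos hdet.ne_zero 1
  have hRow0 := row_pos hBdet 0
  have hRow1 := row_pos hBdet 1
  -- direct extraction for rows of C
  have hc1 : ∀ n (i : Fin 2),
      ![m₁ * poch l n, m₁ * poch μ n] i ≤
        Complex.normSq (C i 0) * poch l' n + Complex.normSq (C i 1) * poch μ' n := by
    intro n i
    have h1 := (h n).1
    rw [smul_diag] at h1
    exact extract₁ h1 i
  have hc2 : ∀ n (i : Fin 2),
      Complex.normSq (C i 0) * poch l' n + Complex.normSq (C i 1) * poch μ' n ≤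
        ![m₂ * poch l n, m₂ * poch μ n] i := by
    intro n i
    have h2 := (h n).2
    rw [smul_diag] at h2
    exact extract₂ h2 i
  -- conjugated extraction for rows of B = C⁻¹
  have key_eq : ∀ (X : Matrix (Fin 2) (Fin 2) ℂ), B * (C * X * Cᴴ) * Bᴴ = X := by
    intro X
    calc B * (C * X * Cᴴ) * Bᴴ = B * C * (X * (Cᴴ * Bᴴ)) := by
          simp only [Matrix.mul_assoc]
      _ = X := by rw [hBC, hCBH, Matrix.mul_one, Matrix.one_mul]
  have hb1 : ∀ n (i : Fin 2),
      Complex.normSq (B i 0) * (m₁ * poch l n) + Complex.normSq (B i 1) * (m₁ * poch μ n) ≤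
        ![poch l' n, poch μ' n] i := by
    intro n i
    have h1 := ((h n).1).mul_mul_conjTranspose_same B
    have heq : B * (C * Matrix.diagonal ![(poch l' n : ℂ), (poch μ' n : ℂ)] * Cᴴ -
        m₁ • Matrix.diagonal ![(poch l n : ℂ), (poch μ n : ℂ)]) * Bᴴ =
        Matrix.diagonal ![(poch l' n : ℂ), (poch μ' n : ℂ)] -
          B * Matrix.diagonal ![((m₁ * poch l n : ℝ):ℂ), ((m₁ * poch μ n : ℝ):ℂ)] * Bᴴ := by
      rw [Matrix.mul_sub, Matrix.sub_mul, key_eq, smul_diag]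
    rw [heq] at h1
    exact extract₂ h1 i
  have hb2 : ∀ n (i : Fin 2),
      ![poch l' n, poch μ' n] i ≤
        Complex.normSq (B i 0) * (m₂ * poch l n) + Complex.normSq (B i 1) * (m₂ * poch μ n) := by
    intro n i
    have h2 := ((h n).2).mul_mul_conjTranspose_same B
    have heq : B * (m₂ • Matrix.diagonal ![(poch l n : ℂ), (poch μ n : ℂ)] -
        C * Matrix.diagonal ![(poch l' n : ℂ), (poch μ' n : ℂ)] * Cᴴ) * Bᴴ =
        B * Matrix.diagonal ![((m₂ * poch l n : ℝ):ℂ), ((m₂ * poch μ n : ℝ):ℂ)] * Bᴴ -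
          Matrix.diagonal ![(poch l' n : ℂ), (poch μ' n : ℂ)] := by
      rw [Matrix.mul_sub, Matrix.sub_mul, key_eq, smul_diag]
    rw [heq] at h2
    exact extract₁ h2 i
  -- apply the key scalar lemma four times
  have hL : l = l' ∨ l = μ' := by
    refine poch_key hl hl' hμ' (Complex.normSq_nonneg _) (Complex.normSq_nonneg _) hrow0
      hm₁ hm₂ (fun n => ?_) (fun n => ?_)
    · simpa using hc1 n 0
    · simpa using hc2 n 0
  have hM : μ = l' ∨ μ = μ' := by
    refine poch_key hμ hl' hμ' (Complex.normSq_nonneg _) (Complex.normSq_nonneg _) hrow1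
      hm₁ hm₂ (fun n => ?_) (fun n => ?_)
    · simpa using hc1 n 1
    · simpa using hc2 n 1
  have hL' : l' = l ∨ l' = μ := by
    refine poch_key hl' hl hμ (Complex.normSq_nonneg _) (Complex.normSq_nonneg _) hRow0
      (one_div_pos.mpr hm₂) (one_div_pos.mpr hm₁) (fun n => ?_) (fun n => ?_)
    · have := hb2 n 0
      simp only [Matrix.cons_val_zero] at this
      rw [div_mul_eq_mul_div, div_le_iff₀ hm₂]
      nlinarith
    · have := hb1 n 0
      simp only [Matrix.cons_val_zero] at this
      rw [div_mul_eq_mul_div, le_div_iff₀ hm₁]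
      nlinarith
  have hM' : μ' = l ∨ μ' = μ := by
    refine poch_key hμ' hl hμ (Complex.normSq_nonneg _) (Complex.normSq_nonneg _) hRow1
      (one_div_pos.mpr hm₂) (one_div_pos.mpr hm₁) (fun n => ?_) (fun n => ?_)
    · have := hb2 n 1
      simp only [Matrix.cons_val_one, Matrix.head_cons, Matrix.cons_val_zero] at this
      rw [div_mul_eq_mul_div, div_le_iff₀ hm₂]
      nlinarith
    · have := hb1 n 1
      simp only [Matrix.cons_val_one, Matrix.head_cons, Matrix.cons_val_zero] at this
      rw [div_mul_eq_mul_div, le_div_iff₀ hm₁]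
      nlinarith
  rcases hL with h1 | h1 <;> rcases hM with h2 | h2 <;> rcases hL' with h3 | h3 <;>
    rcases hM' with h4 | h4 <;>
    first
      | (left; constructor <;> linarith)
      | (right; constructor <;> linarith)
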